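/- (Theorem 3, main result) Let L be a real number. The set {λ ∈ E₁ : |λ| = L} has exactly 3 elements if and only if there exists a positive natural number u, all of whose prime factors are congruent to 2 modulo 3, such that L = u/√3. -/

import Mathlib

noncomputable def ω : ℂ := (1 + Real.sqrt 3 * Complex.I) / 2

noncomputable def φ : ℂ := -(1 + ω) / 3

noncomputable def E (j : ℕ) : Set ℂ := {z | ∃ n m : ℤ, z = (n : ℂ) + (m : ℂ) * ω + (j : ℂ) * φ}

def Sset (k : ℤ) : Set (ℤ × ℤ) :=
  {w | w.1^2 + w.1*w.2 + w.2^2 = k ∧ (w.1 - w.2) % 3 = 1}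

set_option linter.unnecessarySeqFocus false
set_option linter.unusedTactic false

lemma order_three_mod {q : ℕ} (hq : q.Prime) (hq3 : q ≠ 3) (x : ZMod q)
    (hx : x^2 + x + 1 = 0) : q % 3 = 1 := by
  haveI : Fact q.Prime := ⟨hq⟩
  have hx3 : x^3 = 1 := by
    have : x^3 - 1 = (x - 1) * (x^2 + x + 1) := by ring
    have h2 : x^3 - 1 = 0 := by rw [this, hx, mul_zero]
    linear_combination h2
  have hx1 : x ≠ 1 := by
    rintro rfl
    have : ((3 : ℕ) : ZMod q) = 0 := by push_cast; linear_combination hx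
    have h3 := (ZMod.natCast_eq_zero_iff 3 q).mp this
    have := (Nat.prime_dvd_prime_iff_eq hq (by norm_num)).mp h3
    exact hq3 this
  have hxu : IsUnit x := by
    apply IsUnit.of_mul_eq_one (x^2)
    linear_combination hx3
  have hX3 : hxu.unit^3 = 1 := by ext; push_cast; exact hx3
  have hXne : hxu.unit ≠ 1 := by
    intro h
    apply hx1
    have := congrArg (Units.val) h
    simpa using this
  have hord : orderOf hxu.unit = 3 := by
    have hdvd : orderOf hxu.unit ∣ 3 := orderOf_dvd_of_pow_eq_one hX3
    rcases (Nat.Prime.eq_one_or_self_of_dvd (by norm_num) _ hdvd) with h | h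
    · exact absurd (orderOf_eq_one_iff.mp h) hXne
    · exact h
  have hcard : orderOf hxu.unit ∣ Fintype.card (ZMod q)ˣ := orderOf_dvd_card
  rw [ZMod.card_units_eq_totient, Nat.totient_prime hq, hord] at hcard
  have h2 := hq.two_le
  omega

lemma aniso {q : ℕ} (hq : q.Prime) (h3 : q % 3 = 2) {c d : ℤ}
    (h : (q:ℤ) ∣ c^2 + c*d + d^2) : (q:ℤ) ∣ c ∧ (q:ℤ) ∣ d := by
  haveI : Fact q.Prime := ⟨hq⟩
  set C := (c : ZMod q) with hC
  set D := (d : ZMod q) with hD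
  have hCD : C^2 + C*D + D^2 = 0 := by
    have := (ZMod.intCast_zmod_eq_zero_iff_dvd _ q).mpr h
    push_cast at this
    linear_combination this
  have hDz : D = 0 := by
    by_contra hDne
    have hinv : D * D⁻¹ = 1 := ZMod.mul_inv_of_unit D (Ne.isUnit hDne)
    have hx : (C * D⁻¹)^2 + (C * D⁻¹) + 1 = 0 := by
      have : (C * D⁻¹)^2 + (C * D⁻¹) + 1 = (C^2 + C*D + D^2) * (D⁻¹)^2 := by
        linear_combination (-(C * D⁻¹ + 1 + D * D⁻¹)) * hinv
      rw [this, hCD, zero_mul]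
    have := order_three_mod hq (by omega) _ hx
    omega
  have hCz : C = 0 := by
    rw [hDz] at hCD
    have : C^2 = 0 := by linear_combination hCD
    exact pow_eq_zero_iff (by norm_num) |>.mp this
  constructor
  · exact (ZMod.intCast_zmod_eq_zero_iff_dvd c q).mp hCz
  · exact (ZMod.intCast_zmod_eq_zero_iff_dvd d q).mp hDz

lemma descent : ∀ (u : ℕ), 0 < u → (∀ p : ℕ, p.Prime → p ∣ u → p % 3 = 2) →
    ∀ c d : ℤ, c^2 + c*d + d^2 = (u:ℤ)^2 → (u:ℤ) ∣ c ∧ (u:ℤ) ∣ d := by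
  intro u
  induction u using Nat.strong_induction_on with
  | _ u ih =>
    intro hu hall c d h
    rcases eq_or_lt_of_le (show 1 ≤ u from hu) with h1 | h1
    · rw [← h1]
      exact ⟨one_dvd _, one_dvd _⟩
    · set q := u.minFac with hqdef
      have hqp : q.Prime := Nat.minFac_prime (by omega)
      have hqd : q ∣ u := Nat.minFac_dvd u
      have hq3 : q % 3 = 2 := hall q hqp hqd
      have hqZ : (q:ℤ) ∣ (u:ℤ) := Int.natCast_dvd_natCast.mpr hqd
      have hdvd : (q:ℤ) ∣ c^2 + c*d + d^2 := by
        rw [h]; exact dvd_pow hqZ two_ne_zero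
      obtain ⟨hc, hd⟩ := aniso hqp hq3 hdvd
      obtain ⟨c', rfl⟩ := hc
      obtain ⟨d', rfl⟩ := hd
      obtain ⟨u', hu'⟩ := hqd
      have hq0 : (q:ℤ) ≠ 0 := by exact_mod_cast hqp.ne_zero
      have h' : c'^2 + c'*d' + d'^2 = (u':ℤ)^2 := by
        have : (q:ℤ)^2 * (c'^2 + c'*d' + d'^2) = (q:ℤ)^2 * (u':ℤ)^2 := by
          rw [hu'] at h; push_cast at h ⊢; linear_combination h
        exact mul_left_cancel₀ (pow_ne_zero 2 hq0) this
      have hu'pos : 0 < u' := by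
        rcases Nat.eq_zero_or_pos u' with h0 | h0
        · rw [h0, mul_zero] at hu'; omega
        · exact h0
      have hu'lt : u' < u := by
        have := hqp.two_le
        nlinarith [hu', hu'pos]
      obtain ⟨hc', hd'⟩ := ih u' hu'lt hu'pos
        (fun p hp hpd => hall p hp (hpd.trans ⟨q, by rw [hu']; ring⟩)) c' d' h'
      constructor
      · rw [hu']; push_cast; exact mul_dvd_mul_left _ hc'
      · rw [hu']; push_cast; exact mul_dvd_mul_left _ hd'

lemma normOneCases {c d : ℤ} (h : c^2 + c*d + d^2 = 1) :
    (c = 1 ∧ d = 0) ∨ (c = 0 ∧ d = 1) ∨ (c = -1 ∧ d = 1) ∨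
    (c = -1 ∧ d = 0) ∨ (c = 0 ∧ d = -1) ∨ (c = 1 ∧ d = -1) := by
  have hc1 : -1 ≤ c := by nlinarith [sq_nonneg (2*d + c), sq_nonneg (c+1)]
  have hc2 : c ≤ 1 := by nlinarith [sq_nonneg (2*d + c), sq_nonneg (c-1)]
  have hd1 : -1 ≤ d := by nlinarith [sq_nonneg (2*c + d), sq_nonneg (d+1)]
  have hd2 : d ≤ 1 := by nlinarith [sq_nonneg (2*c + d), sq_nonneg (d-1)]
  interval_cases c <;> interval_cases d <;> omega

lemma prime_not_sq {p : ℕ} (hp : p.Prime) (e : ℤ) : e^2 ≠ (p:ℤ) := by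
  intro h
  have h1 : e.natAbs^2 = p := by
    have := congrArg Int.natAbs h
    simpa [Int.natAbs_pow] using this
  have hdvd : e.natAbs ∣ p := ⟨e.natAbs, by rw [← h1]; ring⟩
  rcases hp.eq_one_or_self_of_dvd _ hdvd with h2 | h2
  · rw [h2] at h1; simp at h1; exact hp.one_lt.ne' h1.symm
  · rw [h2] at h1
    have := hp.two_le
    nlinarith

lemma exists_root {p : ℕ} (hp : p.Prime) (h1 : p % 3 = 1) :
    ∃ y : ZMod p, y^2 + y + 1 = 0 := by
  haveI : Fact p.Prime := ⟨hp⟩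
  have hcard : Nat.card (ZMod p)ˣ = p - 1 := by
    rw [Nat.card_eq_fintype_card, ZMod.card_units_eq_totient, Nat.totient_prime hp]
  obtain ⟨g, hg⟩ := IsCyclic.exists_ofOrder_eq_natCard (α := (ZMod p)ˣ)
  rw [hcard] at hg
  have hp2 := hp.two_le
  have h3 : 3 ∣ p - 1 := by omega
  obtain ⟨s, hs⟩ := h3
  have hs0 : 0 < s := by omega
  set x := g ^ s with hx
  have hordx : orderOf x = 3 := by
    rw [hx, orderOf_pow, hg, hs]
    have hgcd : (3*s).gcd s = s := by
      rw [Nat.gcd_comm]; exact Nat.gcd_eq_left ⟨3, by ring⟩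
    rw [hgcd, Nat.mul_div_cancel _ hs0]
  have hx3 : x^3 = 1 := by rw [← hordx]; exact pow_orderOf_eq_one x
  have hx1 : x ≠ 1 := by
    intro h
    rw [h, orderOf_one] at hordx
    norm_num at hordx
  refine ⟨(x : ZMod p), ?_⟩
  have hy3 : (x : ZMod p)^3 = 1 := by
    have := congrArg (Units.val) hx3
    push_cast at this
    exact this
  have hy1 : (x : ZMod p) ≠ 1 := by
    intro h
    exact hx1 (Units.ext h)
  have hfac : ((x:ZMod p) - 1) * ((x:ZMod p)^2 + (x:ZMod p) + 1) = 0 := by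
    linear_combination hy3
  rcases mul_eq_zero.mp hfac with h | h
  · exact absurd (by linear_combination h) hy1
  · exact h

set_option maxHeartbeats 1000000 in
lemma exists_rep {p : ℕ} (hp : p.Prime) (h1 : p % 3 = 1) :
    ∃ e f : ℤ, e^2 + e*f + f^2 = (p:ℤ) := by
  haveI : Fact p.Prime := ⟨hp⟩
  have hp2 := hp.two_le
  obtain ⟨y, hy⟩ := exists_root hp h1
  obtain ⟨r, hrdef⟩ : ∃ r : ℕ, r = Nat.sqrt p := ⟨_, rfl⟩
  have hrle : r * r ≤ p := by rw [hrdef]; simpa [pow_two] using Nat.sqrt_le' p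
  have hrlt : r * r < p := by
    rcases lt_or_eq_of_le hrle with h | h
    · exact h
    · exfalso
      have hdvd : r ∣ p := ⟨r, h.symm⟩
      rcases hp.eq_one_or_self_of_dvd _ hdvd with h2 | h2
      · rw [h2] at h; omega
      · rw [h2] at h; nlinarith
  have hplt : p < (r+1) * (r+1) := by
    rw [hrdef]; simpa [pow_two, Nat.succ_eq_add_one] using Nat.lt_succ_sqrt' p
  have hcard : (Finset.univ : Finset (ZMod p)).card <
      ((Finset.range (r+1)) ×ˢ (Finset.range (r+1))).card := by
    rw [Finset.card_product, Finset.card_range, Finset.card_univ, ZMod.card]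
    exact hplt
  obtain ⟨ab1, h1m, ab2, h2m, hne, heq⟩ :=
    Finset.exists_ne_map_eq_of_card_lt_of_maps_to hcard
      (fun (a : ℕ × ℕ) _ => Finset.mem_univ ((a.1 : ZMod p) - y * (a.2 : ZMod p)))
  simp only [Finset.mem_product, Finset.mem_range] at h1m h2m
  obtain ⟨e0, he0⟩ : ∃ z : ℤ, z = (ab1.1 : ℤ) - (ab2.1 : ℤ) := ⟨_, rfl⟩
  obtain ⟨f0, hf0⟩ : ∃ z : ℤ, z = (ab1.2 : ℤ) - (ab2.2 : ℤ) := ⟨_, rfl⟩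
  have hcast : ((e0 : ℤ) : ZMod p) = y * ((f0 : ℤ) : ZMod p) := by
    rw [he0, hf0]
    push_cast
    linear_combination heq
  have hNdvd : (p:ℤ) ∣ e0^2 + e0*f0 + f0^2 := by
    have hz : ((e0^2 + e0*f0 + f0^2 : ℤ) : ZMod p) = 0 := by
      push_cast
      rw [hcast]
      linear_combination (((f0:ℤ) : ZMod p))^2 * hy
    exact (ZMod.intCast_zmod_eq_zero_iff_dvd _ p).mp hz
  have hne0 : e0 ≠ 0 ∨ f0 ≠ 0 := by
    by_contra hcon
    push_neg at hcon
    apply hne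
    have h1' : ab1.1 = ab2.1 := by omega
    have h2' : ab1.2 = ab2.2 := by omega
    exact Prod.ext h1' h2'
  have hNpos : 0 < e0^2 + e0*f0 + f0^2 := by
    rcases hne0 with h | h
    · nlinarith [sq_nonneg (2*f0 + e0), sq_pos_of_ne_zero h]
    · nlinarith [sq_nonneg (2*e0 + f0), sq_pos_of_ne_zero h]
  have hb1 : -(r:ℤ) ≤ e0 ∧ e0 ≤ r := by omega
  have hb2 : -(r:ℤ) ≤ f0 ∧ f0 ≤ r := by omega
  have hrp : (r:ℤ) * r < p := by exact_mod_cast hrlt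
  have hee : e0^2 ≤ (r:ℤ)*r := by nlinarith [hb1.1, hb1.2]
  have hff : f0^2 ≤ (r:ℤ)*r := by nlinarith [hb2.1, hb2.2]
  have hcross : 2*(e0*f0) ≤ e0^2 + f0^2 := by nlinarith [sq_nonneg (e0-f0)]
  have hNlt : e0^2 + e0*f0 + f0^2 < 3 * p := by linarith
  obtain ⟨k, hk⟩ := hNdvd
  have hppos : (0:ℤ) < p := by exact_mod_cast hp.pos
  have hk1 : 0 < k := by nlinarith
  have hk2 : k < 3 := by nlinarith
  interval_cases k
  · exact ⟨e0, f0, by linarith [hk]⟩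
  · exfalso
    have h2d : ((2:ℕ):ℤ) ∣ e0^2 + e0*f0 + f0^2 := ⟨p, by rw [hk]; push_cast; ring⟩
    obtain ⟨he, hf⟩ := aniso Nat.prime_two (by norm_num) h2d
    obtain ⟨e', he'⟩ := he
    obtain ⟨f', hf'⟩ := hf
    have hdp : (2:ℤ) ∣ (p:ℤ) := by
      refine ⟨e'^2 + e'*f' + f'^2, ?_⟩
      have h4 : (4:ℤ) * (e'^2 + e'*f' + f'^2) = p * 2 := by
        rw [he', hf'] at hk; push_cast at hk ⊢; linarith [hk]
      linarith
    have hdp' : (2:ℕ) ∣ p := by exact_mod_cast hdp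
    have := (Nat.prime_dvd_prime_iff_eq Nat.prime_two hp).mp hdp'
    omega


lemma card_S_usq (u : ℕ) (hu : 0 < u)
    (hall : ∀ p : ℕ, p.Prime → p ∣ u → p % 3 = 2) :
    (Sset ((u:ℤ)^2)).ncard = 3 := by
  have h3u : ¬ (3 ∣ u) := by
    intro h
    have := hall 3 (by norm_num) h
    omega
  have h3uZ : ¬ ((3:ℤ) ∣ (u:ℤ)) := by exact_mod_cast h3u
  have hum : (u:ℤ) % 3 = 1 ∨ (u:ℤ) % 3 = 2 := by omega
  set t : ℤ := if (u:ℤ) % 3 = 1 then (u:ℤ) else -(u:ℤ) with htdef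
  have ht2 : t^2 = (u:ℤ)^2 := by
    rw [htdef]; split <;> ring
  have htmod : t % 3 = 1 := by
    rw [htdef]; split
    · assumption
    · omega
  have ht0 : t ≠ 0 := by
    rw [htdef]; split <;> simp <;> omega
  have hSeq : Sset ((u:ℤ)^2) = {(t,0), (-t,t), (0,-t)} := by
    ext ⟨c, d⟩
    simp only [Sset, Set.mem_setOf_eq, Set.mem_insert_iff, Set.mem_singleton_iff,
      Prod.mk.injEq]
    constructor
    · rintro ⟨hn, hm⟩
      obtain ⟨hc, hd⟩ := descent u hu hall c d hn
      obtain ⟨c', rfl⟩ := hc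
      obtain ⟨d', rfl⟩ := hd
      have hu0 : ((u:ℤ)) ≠ 0 := by positivity
      have h1 : c'^2 + c'*d' + d'^2 = 1 := by
        have : (u:ℤ)^2 * (c'^2 + c'*d' + d'^2) = (u:ℤ)^2 * 1 := by
          linear_combination hn
        exact mul_left_cancel₀ (pow_ne_zero 2 hu0) this
      rcases normOneCases h1 with ⟨rfl,rfl⟩|⟨rfl,rfl⟩|⟨rfl,rfl⟩|⟨rfl,rfl⟩|⟨rfl,rfl⟩|⟨rfl,rfl⟩ <;>
        [skip; skip; skip; skip; skip; skip] <;>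
      · simp only [mul_one, mul_zero, mul_neg] at hm ⊢
        rw [htdef]
        rcases hum with h | h <;> simp [h] <;> omega
    · intro hmem
      rcases hmem with ⟨rfl, rfl⟩ | ⟨rfl, rfl⟩ | ⟨rfl, rfl⟩ <;>
        constructor <;> first
        | (rw [← ht2]; ring)
        | omega
  rw [hSeq]
  rw [Set.ncard_eq_three]
  exact ⟨(t,0), (-t,t), (0,-t), by simp [Prod.ext_iff]; omega,
    by simp [Prod.ext_iff]; omega, by simp [Prod.ext_iff]; omega, rfl⟩

lemma forward_S {k : ℤ} (hcard : (Sset k).ncard = 3) :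
    ∃ u : ℕ, 0 < u ∧ (∀ p : ℕ, p.Prime → p ∣ u → p % 3 = 2) ∧ k = (u:ℤ)^2 := by
  have hfin : (Sset k).Finite := by
    by_contra h
    rw [Set.Infinite.ncard h] at hcard
    omega
  have hne : (Sset k).Nonempty := by
    apply Set.nonempty_of_ncard_ne_zero
    omega
  obtain ⟨⟨c, d⟩, hcd, hclass⟩ := hne
  -- the rotation
  have hRmem : ∀ a b : ℤ, (a, b) ∈ Sset k → (-(a+b), a) ∈ Sset k := by
    rintro a b ⟨h1, h2⟩
    refine ⟨by linear_combination h1, by omega⟩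
  have hy1 := hRmem c d ⟨hcd, hclass⟩
  have hy2 := hRmem _ _ hy1
  have hcd0 : ¬ (c = 0 ∧ d = 0) := by
    rintro ⟨rfl, rfl⟩
    simp at hclass
  have htriple : ({((c,d) : ℤ×ℤ), (-(c+d), c), (-(-(c+d)+c), -(c+d))} : Set (ℤ×ℤ))
      = Sset k := by
    apply Set.eq_of_subset_of_ncard_le
    · intro w hw
      rcases hw with rfl | rfl | rfl
      · exact ⟨hcd, hclass⟩
      · exact hy1
      · exact hy2
    · rw [hcard]
      have h3 : ({((c,d) : ℤ×ℤ), (-(c+d), c), (-(-(c+d)+c), -(c+d))} : Set (ℤ×ℤ)).ncard = 3 := by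
        rw [Set.ncard_eq_three]
        refine ⟨_, _, _, ?_, ?_, ?_, rfl⟩ <;> simp [Prod.ext_iff] <;> omega
      omega
    · exact hfin
  -- every element of S has a special shape
  have hP : ∀ w ∈ Sset k, w.2 = 0 ∨ w.1 = 0 ∨ w.1 + w.2 = 0 := by
    -- conjugation
    have hCmem : ((c+d), -d) ∈ Sset k := ⟨by linear_combination hcd, by omega⟩
    rw [← htriple] at hCmem
    simp only [Set.mem_insert_iff, Set.mem_singleton_iff, Prod.mk.injEq] at hCmem
    rw [← htriple]
    rintro w (rfl | rfl | rfl) <;> simp <;> omega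
  -- k is a square
  obtain ⟨t, ht⟩ : ∃ t : ℤ, k = t^2 := by
    have := hP (c,d) ⟨hcd, hclass⟩
    simp only at this
    rcases this with h | h | h
    · exact ⟨c, by rw [← hcd, h]; ring⟩
    · exact ⟨d, by rw [← hcd, h]; ring⟩
    · exact ⟨c, by rw [← hcd, show d = -c by omega]; ring⟩
  have ht0 : t ≠ 0 := by
    rintro rfl
    simp only [ne_eq, OfNat.ofNat_ne_zero, not_false_eq_true, zero_pow] at ht
    rw [ht] at hcd
    have hd0 : d = 0 := by nlinarith [sq_nonneg (2*c+d), sq_nonneg d]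
    have hc0 : c = 0 := by nlinarith
    exact hcd0 ⟨hc0, hd0⟩
  refine ⟨t.natAbs, Int.natAbs_pos.mpr ht0, ?_, ?_⟩
  swap
  · rw [ht]
    rcases Int.natAbs_eq t with h | h <;> nth_rewrite 1 [h] <;> ring
  intro p hp hpu
  -- k ≡ 1 mod 3
  have hk3 : k % 3 = 1 := by
    obtain ⟨e, he⟩ : ∃ e, c = d + (3*e + 1) := ⟨(c-d-1)/3, by omega⟩
    have : k = 3*(d^2 + d*(3*e+1) + 3*e^2 + 2*e) + 1 := by
      rw [← hcd, he]; ring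
    omega
  have hpZ : (p:ℤ) ∣ t := by
    have : (p:ℤ) ∣ (t.natAbs : ℤ) := Int.natCast_dvd_natCast.mpr hpu
    rcases Int.natAbs_eq t with h | h
    · rw [h]; exact this
    · rw [h]; exact dvd_neg.mpr this
  have hp3 : p ≠ 3 := by
    rintro rfl
    obtain ⟨w, hw⟩ := hpZ
    have : k = 9 * w^2 := by rw [ht, hw]; push_cast; ring
    omega
  have hpmod : p % 3 = 1 ∨ p % 3 = 2 := by
    have h2 := hp.two_le
    have : p % 3 ≠ 0 := by
      intro h
      exact hp3 ((Nat.prime_dvd_prime_iff_eq (by norm_num) hp).mp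
        (Nat.dvd_of_mod_eq_zero h)).symm
    omega
  rcases hpmod with hp1 | hp2
  swap
  · exact hp2
  exfalso
  obtain ⟨e, f, hef⟩ := exists_rep hp hp1
  obtain ⟨v, hv⟩ := hpZ
  -- the candidate extra solution
  have hnorm : (v*(e^2 - f^2))^2 + (v*(e^2-f^2))*(v*(2*e*f + f^2)) + (v*(2*e*f+f^2))^2
      = k := by
    rw [ht, hv]
    linear_combination (v^2*(e^2+e*f+f^2 + (p:ℤ))) * hef
  set c1 : ℤ := v*(e^2 - f^2) with hc1
  set d1 : ℤ := v*(2*e*f + f^2) with hd1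
  have hclass0 : (c1 - d1) % 3 ≠ 0 := by
    intro h0
    obtain ⟨w, hw⟩ : ∃ w, c1 = d1 + 3*w := ⟨(c1-d1)/3, by omega⟩
    have : k = 3*(d1^2 + 3*d1*w + 3*w^2) := by rw [← hnorm, hw]; ring
    omega
  have hzmem : (if (c1 - d1) % 3 = 1 then (c1, d1) else (-c1, -d1)) ∈ Sset k := by
    split
    · exact ⟨hnorm, by assumption⟩
    · refine ⟨by linear_combination hnorm, by omega⟩
  have hPz := hP _ hzmem
  have hv0 : v ≠ 0 := by
    rintro rfl
    rw [mul_zero] at hv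
    exact ht0 hv
  have h3div : ∀ s : ℤ, (p:ℤ) = 3*s^2 → False := by
    intro s hs
    have h3 : ((3:ℕ):ℤ) ∣ (p:ℤ) := ⟨s^2, by exact_mod_cast hs⟩
    have h3' : (3:ℕ) ∣ p := by exact_mod_cast h3
    exact hp3 ((Nat.prime_dvd_prime_iff_eq (by norm_num) hp).mp h3').symm
  have hPz' : d1 = 0 ∨ c1 = 0 ∨ c1 + d1 = 0 := by
    split at hPz <;> simp only at hPz
    · exact hPz
    · rcases hPz with h | h | h
      · exact Or.inl (by linarith)
      · exact Or.inr (Or.inl (by linarith))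
      · exact Or.inr (Or.inr (by linarith))
  rcases hPz' with h | h | h
  · have h' : 2*e*f + f^2 = 0 := by
      rcases mul_eq_zero.mp (hd1 ▸ h : v*(2*e*f + f^2) = 0) with h' | h'
      · exact absurd h' hv0
      · exact h'
    rcases mul_eq_zero.mp (show f*(2*e+f) = 0 by linear_combination h') with hf0 | hf0
    · exact prime_not_sq hp e (by linear_combination hef - e*hf0 - f*hf0)
    · exact h3div e (by linear_combination -hef + (f - e)*hf0)
  · have h' : e^2 - f^2 = 0 := by
      rcases mul_eq_zero.mp (hc1 ▸ h : v*(e^2 - f^2) = 0) with h' | h'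
      · exact absurd h' hv0
      · exact h'
    rcases mul_eq_zero.mp (show (e-f)*(e+f) = 0 by linear_combination h') with hf0 | hf0
    · exact h3div e (by linear_combination -hef - (2*e+f)*hf0)
    · exact prime_not_sq hp f (by linear_combination hef - e*hf0)
  · have h' : e^2 + 2*e*f = 0 := by
      have : v * ((e^2 - f^2) + (2*e*f + f^2)) = 0 := by
        rw [mul_add, ← hc1, ← hd1]; exact h
      rcases mul_eq_zero.mp this with h' | h'
      · exact absurd h' hv0
      · linear_combination h'
    rcases mul_eq_zero.mp (show e*(e+2*f) = 0 by linear_combination h') with hf0 | hf0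
    · exact prime_not_sq hp f (by linear_combination hef - (e + f)*hf0)
    · exact h3div f (by linear_combination -hef + (e-f)*hf0)


lemma omega_re : ω.re = 1/2 := by simp [ω]
lemma omega_im : ω.im = Real.sqrt 3 / 2 := by simp [ω]

lemma normsq_comb (a b : ℝ) : Complex.normSq ((a:ℂ) + (b:ℂ) * ω) = a^2 + a*b + b^2 := by
  have h3 : Real.sqrt 3 * Real.sqrt 3 = 3 := Real.mul_self_sqrt (by norm_num)
  simp [Complex.normSq_apply, Complex.add_re, Complex.add_im, Complex.mul_re,
    Complex.mul_im, omega_re, omega_im, Complex.ofReal_re, Complex.ofReal_im]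
  ring_nf
  nlinarith [h3]

noncomputable def G (w : ℤ × ℤ) : ℂ :=
  (((-w.1 - 2*w.2 : ℤ) : ℂ) + ((2*w.1 + w.2 : ℤ) : ℂ) * ω) / 3

lemma real_comb_inj {a b a' b' : ℝ} (h : (a:ℂ) + (b:ℂ) * ω = (a':ℂ) + (b':ℂ) * ω) :
    a = a' ∧ b = b' := by
  have h3 : Real.sqrt 3 ≠ 0 := by
    have : (0:ℝ) < Real.sqrt 3 := Real.sqrt_pos.mpr (by norm_num)
    linarith
  have him : ((a:ℂ) + (b:ℂ) * ω).im = ((a':ℂ) + (b':ℂ) * ω).im := by rw [h]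
  simp [Complex.add_im, Complex.mul_im, omega_im, omega_re] at him
  have hre : ((a:ℂ) + (b:ℂ) * ω).re = ((a':ℂ) + (b':ℂ) * ω).re := by rw [h]
  simp [Complex.add_re, Complex.mul_re, omega_re, omega_im] at hre
  subst him
  exact ⟨by linarith, rfl⟩

lemma G_inj : Function.Injective G := by
  rintro ⟨c, d⟩ ⟨c', d'⟩ h
  unfold G at h
  have h' : ((-c - 2*d : ℤ) : ℂ) + ((2*c + d : ℤ) : ℂ) * ω
      = ((-c' - 2*d' : ℤ) : ℂ) + ((2*c' + d' : ℤ) : ℂ) * ω := by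
    field_simp at h
    convert h using 2 <;> push_cast <;> ring
  rw [show ((-c - 2*d : ℤ) : ℂ) = (((-c - 2*d : ℤ) : ℝ) : ℂ) by push_cast; ring] at h'
  rw [show ((2*c + d : ℤ) : ℂ) = (((2*c + d : ℤ) : ℝ) : ℂ) by push_cast; ring] at h'
  rw [show ((-c' - 2*d' : ℤ) : ℂ) = (((-c' - 2*d' : ℤ) : ℝ) : ℂ) by push_cast; ring] at h'
  rw [show ((2*c' + d' : ℤ) : ℂ) = (((2*c' + d' : ℤ) : ℝ) : ℂ) by push_cast; ring] at h'
  obtain ⟨h1, h2⟩ := real_comb_inj h'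
  have h1' : -c - 2*d = -c' - 2*d' := by exact_mod_cast h1
  have h2' : 2*c + d = 2*c' + d' := by exact_mod_cast h2
  have : c = c' ∧ d = d' := by omega
  simp [Prod.ext_iff, this.1, this.2]

lemma G_abs (c d : ℤ) :
    ‖G (c, d)‖^2 = ((c^2 + c*d + d^2 : ℤ) : ℝ) / 3 := by
  rw [← Complex.normSq_eq_norm_sq]
  unfold G
  rw [map_div₀]
  rw [show ((-(c:ℤ) - 2*d : ℤ) : ℂ) = (((-c - 2*d : ℤ) : ℝ) : ℂ) by push_cast; ring]
  rw [show ((2*(c:ℤ) + d : ℤ) : ℂ) = (((2*c + d : ℤ) : ℝ) : ℂ) by push_cast; ring]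
  rw [normsq_comb]
  have : Complex.normSq 3 = 9 := by
    simp [Complex.normSq_apply]; norm_num
  rw [this]
  push_cast
  ring

lemma E_elt_eq (n m : ℤ) :
    (n:ℂ) + (m:ℂ)*ω + ((1:ℕ):ℂ)*φ = G (n + 2*m - 1, 1 - 2*n - m) := by
  unfold G φ
  have h3 : (3:ℂ) ≠ 0 := by norm_num
  field_simp
  push_cast
  ring

lemma G_mem_E (c d : ℤ) (hcl : (c - d) % 3 = 1) : G (c,d) ∈ E 1 := by
  obtain ⟨e, he⟩ : ∃ e, c - d = 3*e + 1 := ⟨(c-d-1)/3, by omega⟩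
  obtain ⟨n, hn⟩ : ∃ n, 2*n = e + 1 - (c + d) := ⟨(e+1-(c+d))/2, by omega⟩
  refine ⟨n, c + d + n, ?_⟩
  rw [E_elt_eq]
  have hpair : (c, d) = ((n + 2*(c + d + n) - 1 : ℤ), (1 - 2*n - (c + d + n) : ℤ)) := by
    rw [Prod.ext_iff]
    constructor <;> simp <;> omega
  rw [← hpair]

lemma main_eq (L : ℝ) (hL : 0 ≤ L) (k : ℤ) (hk : (k:ℝ) = 3*L^2) :
    {z ∈ E 1 | ‖z‖ = L} = G '' Sset k := by
  ext z
  simp only [Set.mem_setOf_eq, Set.mem_image, Set.mem_sep_iff]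
  constructor
  · rintro ⟨⟨n, m, rfl⟩, habs⟩
    refine ⟨(n + 2*m - 1, 1 - 2*n - m), ⟨?_, by omega⟩, (E_elt_eq n m).symm⟩
    have h1 : ‖G (n+2*m-1, 1-2*n-m)‖^2 = L^2 := by
      rw [← E_elt_eq, habs]
    rw [G_abs] at h1
    have h2 : ((((n+2*m-1)^2 + (n+2*m-1)*(1-2*n-m) + (1-2*n-m)^2 : ℤ)):ℝ) = (k:ℝ) := by
      rw [hk]
      push_cast at h1 ⊢
      linarith
    exact_mod_cast h2
  · rintro ⟨⟨c, d⟩, ⟨hn, hcl⟩, rfl⟩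
    refine ⟨G_mem_E c d hcl, ?_⟩
    have hG := G_abs c d
    have habs2 : ‖G (c,d)‖^2 = L^2 := by
      simp only at hn
      rw [hG, hn, hk]; ring
    have h0 : 0 ≤ ‖G (c,d)‖ := norm_nonneg _
    have := congrArg Real.sqrt habs2
    rwa [Real.sqrt_sq h0, Real.sqrt_sq hL] at this

theorem magic_lengths (L : ℝ) :
    Set.ncard {z ∈ E 1 | ‖z‖ = L} = 3 ↔
      ∃ u : ℕ, 0 < u ∧ (∀ p : ℕ, p.Prime → p ∣ u → p % 3 = 2) ∧
        L = (u : ℝ) / Real.sqrt 3 := by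
  have hs3 : (0:ℝ) < Real.sqrt 3 := Real.sqrt_pos.mpr (by norm_num)
  constructor
  · intro hcard
    have hne : {z ∈ E 1 | ‖z‖ = L}.Nonempty :=
      Set.nonempty_of_ncard_ne_zero (by omega)
    obtain ⟨z, ⟨n, m, rfl⟩, habs⟩ := hne
    have hL : 0 ≤ L := by rw [← habs]; exact norm_nonneg _
    have hk : (((n+2*m-1)^2 + (n+2*m-1)*(1-2*n-m) + (1-2*n-m)^2 : ℤ):ℝ) = 3*L^2 := by
      have h1 : ‖G (n+2*m-1, 1-2*n-m)‖^2 = L^2 := by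
        rw [← E_elt_eq, habs]
      rw [G_abs] at h1
      push_cast at h1 ⊢
      linarith
    rw [main_eq L hL _ hk, Set.ncard_image_of_injective _ G_inj] at hcard
    obtain ⟨u, hu, hall, hk2⟩ := forward_S hcard
    refine ⟨u, hu, hall, ?_⟩
    have hu2 : ((u:ℝ))^2 = 3*L^2 := by
      rw [← hk, hk2]; push_cast; ring
    have hsq : (L * Real.sqrt 3)^2 = ((u:ℝ))^2 := by
      rw [mul_pow, Real.sq_sqrt (by norm_num : (0:ℝ) ≤ 3), hu2]; ring
    have := congrArg Real.sqrt hsq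
    rw [Real.sqrt_sq (by positivity), Real.sqrt_sq (by positivity)] at this
    rw [eq_div_iff (ne_of_gt hs3)]
    exact this
  · rintro ⟨u, hu, hall, rfl⟩
    have hL : 0 ≤ (u:ℝ)/Real.sqrt 3 := by positivity
    have hk : (((u:ℤ)^2 : ℤ):ℝ) = 3*((u:ℝ)/Real.sqrt 3)^2 := by
      rw [div_pow, Real.sq_sqrt (by norm_num : (0:ℝ) ≤ 3)]
      push_cast
      ring
    rw [main_eq _ hL ((u:ℤ)^2) hk, Set.ncard_image_of_injective _ G_inj]
    exact card_S_usq u hu hall
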